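/- Let 𝒜 be a 2-locally optimal packing of k-sets and ℬ any packing. Let ℬ₁ be the sets of ℬ intersecting exactly one set of 𝒜 and ℬ₂ those intersecting at least two sets of 𝒜. Then ℬ = ℬ₁ ∪ ℬ₂ and |ℬ₁| + 2|ℬ₂| ≤ k·|𝒜|. -/

import Mathlib

/-- Let `𝒜` be a 2-locally optimal packing of `k`-sets and `ℬ` any
packing.  Let `ℬ₁` be the sets of `ℬ` intersecting exactly one set of `𝒜` and `ℬ₂`
those intersecting at least two.  Then `ℬ = ℬ₁ ∪ ℬ₂` and `|ℬ₁| + 2|ℬ₂| ≤ k·|𝒜|`. -/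
theorem stmt_4 {α : Type*} [DecidableEq α] (k : ℕ) (hk : 1 ≤ k)
    (𝒞 A B : Finset (Finset α))
    (hcard : ∀ S ∈ 𝒞, S.card = k)
    (hA : A ⊆ 𝒞) (hApack : ∀ x ∈ A, ∀ y ∈ A, x ≠ y → Disjoint x y)
    (hB : B ⊆ 𝒞) (hBpack : ∀ x ∈ B, ∀ y ∈ B, x ≠ y → Disjoint x y)
    (hlocal : ∀ D ⊆ 𝒞, (∀ x ∈ D, ∀ y ∈ D, x ≠ y → Disjoint x y) → D.card ≤ 2 →
      ((A.filter (fun a => ∀ d ∈ D, Disjoint a d)) ∪ D).card ≤ A.card) :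
    B = B.filter (fun b => (A.filter (fun a => ¬ Disjoint a b)).card = 1) ∪
        B.filter (fun b => 2 ≤ (A.filter (fun a => ¬ Disjoint a b)).card) ∧
    (B.filter (fun b => (A.filter (fun a => ¬ Disjoint a b)).card = 1)).card
      + 2 * (B.filter (fun b => 2 ≤ (A.filter (fun a => ¬ Disjoint a b)).card)).card
      ≤ k * A.card := by
  classical
  -- every b ∈ B meets at least one a ∈ A
  have hone : ∀ b ∈ B, 1 ≤ (A.filter (fun a => ¬ Disjoint a b)).card := by
    intro b hb
    by_contra h
    push_neg at h
    have h0 : A.filter (fun a => ¬ Disjoint a b) = ∅ :=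
      Finset.card_eq_zero.mp (Nat.lt_one_iff.mp h)
    have hall : ∀ a ∈ A, Disjoint a b := by
      intro a ha
      by_contra hd
      have : a ∈ A.filter (fun a => ¬ Disjoint a b) := Finset.mem_filter.mpr ⟨ha, hd⟩
      simp [h0] at this
    have hbC : b ∈ 𝒞 := hB hb
    have hbne : b ≠ ∅ := by
      intro he
      have := hcard b hbC
      rw [he] at this
      simp at this
      omega
    have hbA : b ∉ A := by
      intro hba
      exact hbne (by simpa using disjoint_self.mp (hall b hba))
    have hloc := hlocal {b} (by simpa using hbC)
      (by intro x hx y hy hxy; simp at hx hy; simp [hx, hy] at hxy)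
      (by simp)
    have hfilt : A.filter (fun a => ∀ d ∈ ({b} : Finset (Finset α)), Disjoint a d) = A := by
      apply Finset.filter_true_of_mem
      intro a ha d hd
      simp at hd
      subst hd
      exact hall a ha
    rw [hfilt, Finset.union_comm, ← Finset.insert_eq, Finset.card_insert_of_notMem hbA] at hloc
    omega
  have hsplit : B = B.filter (fun b => (A.filter (fun a => ¬ Disjoint a b)).card = 1) ∪
      B.filter (fun b => 2 ≤ (A.filter (fun a => ¬ Disjoint a b)).card) := by
    rw [← Finset.filter_or]
    symm
    apply Finset.filter_true_of_mem
    intro b hb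
    have := hone b hb
    omega
  refine ⟨hsplit, ?_⟩
  -- each a ∈ A meets at most k sets of B
  have hmeet : ∀ a ∈ A, (B.filter (fun b => ¬ Disjoint a b)).card ≤ k := by
    intro a ha
    have hdsj : (↑(B.filter (fun b => ¬ Disjoint a b)) : Set (Finset α)).PairwiseDisjoint
        (fun b => a ∩ b) := by
      intro x hx y hy hxy
      simp only [Finset.coe_filter, Set.mem_setOf_eq] at hx hy
      exact Finset.disjoint_left.mpr fun z hz hz' => by
        have hzx : z ∈ x := (Finset.mem_inter.mp hz).2
        have hzy : z ∈ y := (Finset.mem_inter.mp hz').2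
        exact (Finset.disjoint_left.mp (hBpack x hx.1 y hy.1 hxy) hzx) hzy
    calc (B.filter (fun b => ¬ Disjoint a b)).card
        ≤ ∑ b ∈ B.filter (fun b => ¬ Disjoint a b), (a ∩ b).card := by
          have := Finset.card_nsmul_le_sum (B.filter (fun b => ¬ Disjoint a b))
            (fun b => (a ∩ b).card) 1 (fun b hb => by
              have hd := (Finset.mem_filter.mp hb).2
              have : (a ∩ b).Nonempty := Finset.not_disjoint_iff_nonempty_inter.mp hd
              exact Finset.card_pos.mpr this)
          simpa using this
      _ = ((B.filter (fun b => ¬ Disjoint a b)).biUnion (fun b => a ∩ b)).card := by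
          rw [Finset.card_biUnion]
          intro x hx y hy hxy
          exact hdsj (by simpa using hx) (by simpa using hy) hxy
      _ ≤ a.card := by
          apply Finset.card_le_card
          intro z hz
          simp only [Finset.mem_biUnion] at hz
          obtain ⟨b, _, hzb⟩ := hz
          exact (Finset.mem_inter.mp hzb).1
      _ = k := hcard a (hA ha)
  -- double counting
  have hdouble : ∑ b ∈ B, (A.filter (fun a => ¬ Disjoint a b)).card
      = ∑ a ∈ A, (B.filter (fun b => ¬ Disjoint a b)).card := by
    simp only [Finset.card_filter]
    rw [Finset.sum_comm]
  have hB1B2 : Disjoint (B.filter (fun b => (A.filter (fun a => ¬ Disjoint a b)).card = 1))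
      (B.filter (fun b => 2 ≤ (A.filter (fun a => ¬ Disjoint a b)).card)) := by
    rw [Finset.disjoint_left]
    intro b hb1 hb2
    have h1 := (Finset.mem_filter.mp hb1).2
    have h2 := (Finset.mem_filter.mp hb2).2
    omega
  calc (B.filter (fun b => (A.filter (fun a => ¬ Disjoint a b)).card = 1)).card
      + 2 * (B.filter (fun b => 2 ≤ (A.filter (fun a => ¬ Disjoint a b)).card)).card
      ≤ ∑ b ∈ B.filter (fun b => (A.filter (fun a => ¬ Disjoint a b)).card = 1),
          (A.filter (fun a => ¬ Disjoint a b)).card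
        + ∑ b ∈ B.filter (fun b => 2 ≤ (A.filter (fun a => ¬ Disjoint a b)).card),
          (A.filter (fun a => ¬ Disjoint a b)).card := by
        have h1 : (B.filter (fun b => (A.filter (fun a => ¬ Disjoint a b)).card = 1)).card
            = ∑ b ∈ B.filter (fun b => (A.filter (fun a => ¬ Disjoint a b)).card = 1),
              (A.filter (fun a => ¬ Disjoint a b)).card := by
          rw [Finset.card_eq_sum_ones]
          exact Finset.sum_congr rfl fun b hb => ((Finset.mem_filter.mp hb).2).symm
        have h2 : 2 * (B.filter (fun b => 2 ≤ (A.filter (fun a => ¬ Disjoint a b)).card)).card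
            ≤ ∑ b ∈ B.filter (fun b => 2 ≤ (A.filter (fun a => ¬ Disjoint a b)).card),
              (A.filter (fun a => ¬ Disjoint a b)).card := by
          have := Finset.card_nsmul_le_sum
            (B.filter (fun b => 2 ≤ (A.filter (fun a => ¬ Disjoint a b)).card))
            (fun b => (A.filter (fun a => ¬ Disjoint a b)).card) 2
            (fun b hb => (Finset.mem_filter.mp hb).2)
          simpa [mul_comm] using this
        omega
    _ = ∑ b ∈ B, (A.filter (fun a => ¬ Disjoint a b)).card := by
        rw [← Finset.sum_union hB1B2, ← hsplit]
    _ = ∑ a ∈ A, (B.filter (fun b => ¬ Disjoint a b)).card := hdouble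
    _ ≤ ∑ a ∈ A, k := Finset.sum_le_sum (fun a ha => hmeet a ha)
    _ = k * A.card := by rw [Finset.sum_const, smul_eq_mul, mul_comm]
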